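/- If Γ is a finitely generated free abelian group and Z an abelian group, then Φ : H²(Γ,Z) → Alt²(Γ,Z), [f] ↦ λ_f, is an isomorphism of abelian groups; in particular every cohomology class in H²(Γ,Z) has a biadditive representative, and a 2-cocycle on Γ is a coboundary if and only if it is symmetric. -/

import Mathlib

namespace PhiIsoAux

variable {n : ℕ} {Z : Type*} [AddCommGroup Z]

/-- standard basis vectors of `ℤⁿ` -/
def e (i : Fin n) : Fin n → ℤ := Pi.single i 1

lemma sum_single (a : Fin n → ℤ) : ∑ i, a i • e i = a := by
  have h : ∀ i : Fin n, a i • e i = Pi.single i (a i) := by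
    intro i
    have := (Pi.single_smul (f := fun _ : Fin n => ℤ) i (a i) (1 : ℤ)).symm
    simpa [e] using this
  simp only [h, Finset.univ_sum_single]

lemma expand_left (η : (Fin n → ℤ) → (Fin n → ℤ) → Z)
    (h1 : ∀ a b c, η (a + b) c = η a c + η b c) (a b : Fin n → ℤ) :
    η a b = ∑ i, a i • η (e i) b := by
  have hz : η 0 b = 0 := by
    have := h1 0 0 b
    simp only [add_zero, zero_add] at this
    exact (left_eq_add.mp this)
  let φ : (Fin n → ℤ) →+ Z :=
    { toFun := fun x => η x b, map_zero' := hz, map_add' := fun x y => h1 x y b }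
  have key : η a b = φ a := rfl
  rw [key]
  conv_lhs => rw [← sum_single a]
  rw [map_sum]
  exact Finset.sum_congr rfl fun i _ => by rw [map_zsmul]; rfl

lemma expand_right (η : (Fin n → ℤ) → (Fin n → ℤ) → Z)
    (h2 : ∀ a b c, η a (b + c) = η a b + η a c) (a b : Fin n → ℤ) :
    η a b = ∑ j, b j • η a (e j) := by
  have hz : η a 0 = 0 := by
    have := h2 a 0 0
    simp only [add_zero, zero_add] at this
    exact (left_eq_add.mp this)
  let φ : (Fin n → ℤ) →+ Z :=
    { toFun := fun x => η a x, map_zero' := hz, map_add' := fun x y => h2 a x y }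
  have key : η a b = φ b := rfl
  rw [key]
  conv_lhs => rw [← sum_single b]
  rw [map_sum]
  exact Finset.sum_congr rfl fun j _ => by rw [map_zsmul]; rfl

lemma expand2 (η : (Fin n → ℤ) → (Fin n → ℤ) → Z)
    (h1 : ∀ a b c, η (a + b) c = η a c + η b c)
    (h2 : ∀ a b c, η a (b + c) = η a b + η a c) (a b : Fin n → ℤ) :
    η a b = ∑ i, ∑ j, (a i * b j) • η (e i) (e j) := by
  rw [expand_left η h1 a b]
  refine Finset.sum_congr rfl fun i _ => ?_
  rw [expand_right η h2 (e i) b, Finset.smul_sum]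
  refine Finset.sum_congr rfl fun j _ => ?_
  rw [smul_smul]

/-- the biadditive representative built from an alternating form -/
def D (η : (Fin n → ℤ) → (Fin n → ℤ) → Z) : (Fin n → ℤ) → (Fin n → ℤ) → Z :=
  fun a b => ∑ i, ∑ j, (a i * b j) • (if i < j then η (e i) (e j) else 0)

lemma D_addl (η : (Fin n → ℤ) → (Fin n → ℤ) → Z) (a b c : Fin n → ℤ) :
    D η (a + b) c = D η a c + D η b c := by
  simp only [D, Pi.add_apply, add_mul, add_smul, Finset.sum_add_distrib]

lemma D_addr (η : (Fin n → ℤ) → (Fin n → ℤ) → Z) (a b c : Fin n → ℤ) :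
    D η a (b + c) = D η a b + D η a c := by
  simp only [D, Pi.add_apply, mul_add, add_smul, Finset.sum_add_distrib]

lemma D_sub (η : (Fin n → ℤ) → (Fin n → ℤ) → Z)
    (h1 : ∀ a b c, η (a + b) c = η a c + η b c)
    (h2 : ∀ a b c, η a (b + c) = η a b + η a c)
    (h0 : ∀ a, η a a = 0) (a b : Fin n → ℤ) :
    D η a b - D η b a = η a b := by
  have anti : ∀ x y, η y x = - η x y := by
    intro x y
    have h := h0 (x + y)
    rw [h1 x y (x + y), h2 x x y, h2 y x y, h0, h0] at h
    rw [zero_add, add_zero] at h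
    exact eq_neg_of_add_eq_zero_right h
  have key : ∀ i j : Fin n,
      (if i < j then η (e i) (e j) else 0) - (if j < i then η (e j) (e i) else 0)
        = η (e i) (e j) := by
    intro i j
    rcases lt_trichotomy i j with h | h | h
    · simp [h, asymm h]
    · subst h; simp [lt_irrefl, h0]
    · rw [if_neg (asymm h), if_pos h, anti (e i) (e j)]; simp
  have hswap : D η b a = ∑ i, ∑ j, (a i * b j) • (if j < i then η (e j) (e i) else 0) := by
    rw [D, Finset.sum_comm]
    exact Finset.sum_congr rfl fun i _ => Finset.sum_congr rfl fun j _ => by rw [mul_comm]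
  calc D η a b - D η b a
      = ∑ i, ∑ j, ((a i * b j) • (if i < j then η (e i) (e j) else 0)
          - (a i * b j) • (if j < i then η (e j) (e i) else 0)) := by
        rw [D, hswap, ← Finset.sum_sub_distrib]
        exact Finset.sum_congr rfl fun i _ => (Finset.sum_sub_distrib _ _).symm
    _ = ∑ i, ∑ j, (a i * b j) • η (e i) (e j) := by
        refine Finset.sum_congr rfl fun i _ => Finset.sum_congr rfl fun j _ => ?_
        rw [← smul_sub, key]
    _ = η a b := (expand2 η h1 h2 a b).symm

/-- the extension of `ℤⁿ` by `Z` determined by a symmetric cocycle -/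
@[ext] structure Ext (n : ℕ) (Z : Type*) where
  z : Z
  v : Fin n → ℤ

lemma symm_coboundary (f : (Fin n → ℤ) → (Fin n → ℤ) → Z)
    (hc : ∀ a b c, f a b + f (a + b) c = f a (b + c) + f b c)
    (hs : ∀ a b, f a b = f b a) :
    ∃ h : (Fin n → ℤ) → Z, ∀ a b, f a b = h a - h (a + b) + h b := by
  have hz0 : ∀ c, f 0 c = f 0 0 := by
    intro c
    have := hc 0 0 c
    simp only [zero_add] at this
    exact (add_right_cancel this).symm
  have ha0 : ∀ a, f a 0 = f 0 0 := by
    intro a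
    have := hc a 0 0
    simp only [add_zero] at this
    exact add_left_cancel this
  letI addI : Add (Ext n Z) := ⟨fun x y => ⟨x.z + y.z + f x.v y.v, x.v + y.v⟩⟩
  letI zeroI : Zero (Ext n Z) := ⟨⟨-f 0 0, 0⟩⟩
  letI negI : Neg (Ext n Z) := ⟨fun x => ⟨-x.z - f 0 0 - f x.v (-x.v), -x.v⟩⟩
  letI : AddCommGroup (Ext n Z) :=
  { add := (· + ·)
    zero := 0
    neg := Neg.neg
    nsmul := nsmulRec
    zsmul := zsmulRec
    add_assoc := by
      rintro ⟨x, a⟩ ⟨y, b⟩ ⟨w, c⟩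
      show Ext.mk (x + y + f a b + w + f (a + b) c) (a + b + c)
         = Ext.mk (x + (y + w + f b c) + f a (b + c)) (a + (b + c))
      have h2 : f (a + b) c = f a (b + c) + f b c - f a b := eq_sub_of_add_eq' (hc a b c)
      rw [h2]
      congr 1
      · abel
      · abel
    zero_add := by
      rintro ⟨x, a⟩
      show Ext.mk (-f 0 0 + x + f 0 a) (0 + a) = Ext.mk x a
      rw [hz0 a]
      congr 1
      · abel
      · abel
    add_zero := by
      rintro ⟨x, a⟩
      show Ext.mk (x + -f 0 0 + f a 0) (a + 0) = Ext.mk x a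
      rw [ha0 a]
      congr 1
      · abel
      · abel
    neg_add_cancel := by
      rintro ⟨x, a⟩
      show Ext.mk (-x - f 0 0 - f a (-a) + x + f (-a) a) (-a + a) = Ext.mk (-f 0 0) 0
      rw [hs (-a) a]
      congr 1
      · abel
      · abel
    add_comm := by
      rintro ⟨x, a⟩ ⟨y, b⟩
      show Ext.mk (x + y + f a b) (a + b) = Ext.mk (y + x + f b a) (b + a)
      rw [hs a b]
      congr 1
      · abel
      · abel }
  let π : Ext n Z →+ (Fin n → ℤ) :=
    { toFun := Ext.v, map_zero' := rfl, map_add' := fun _ _ => rfl }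
  set φ : (Fin n → ℤ) → Ext n Z := fun a => ∑ i, a i • (⟨0, e i⟩ : Ext n Z) with hφ
  have hv : ∀ a, (φ a).v = a := by
    intro a
    have h : (φ a).v = π (φ a) := rfl
    rw [h, hφ, map_sum]
    have : ∀ i : Fin n, π (a i • (⟨0, e i⟩ : Ext n Z)) = a i • e i := by
      intro i; rw [map_zsmul]; rfl
    simp only [this, sum_single]
  have hadd : ∀ a b, φ (a + b) = φ a + φ b := by
    intro a b
    rw [hφ, ← Finset.sum_add_distrib]
    exact Finset.sum_congr rfl fun i _ => by rw [Pi.add_apply, add_smul]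
  have hzc : ∀ x y : Ext n Z, (x + y).z = x.z + y.z + f x.v y.v := fun _ _ => rfl
  refine ⟨fun a => -(φ a).z, ?_⟩
  intro a b
  show f a b = -(φ a).z - -(φ (a + b)).z + -(φ b).z
  have h1 : (φ a + φ b).z = (φ a).z + (φ b).z + f a b := by rw [hzc, hv, hv]
  rw [← hadd] at h1
  rw [h1]
  abel

lemma lambda_addl (f : (Fin n → ℤ) → (Fin n → ℤ) → Z)
    (hc : ∀ a b c, f a b + f (a + b) c = f a (b + c) + f b c) (a b c : Fin n → ℤ) :
    (f (a + b) c - f c (a + b)) = (f a c - f c a) + (f b c - f c b) := by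
  have e1 : f (a + b) c = f a (b + c) + f b c - f a b := eq_sub_of_add_eq' (hc a b c)
  have e2 : f c (a + b) = f c a + f (c + a) b - f a b :=
    eq_sub_iff_add_eq.mpr (hc c a b).symm
  have e3 : f a (b + c) = f a c + f (a + c) b - f c b := by
    have h := hc a c b
    rw [add_comm c b] at h
    exact eq_sub_iff_add_eq.mpr h.symm
  rw [e1, e3, e2, add_comm c a]
  abel

end PhiIsoAux

open PhiIsoAux in
/-- For a finitely generated free abelian group `Γ = ℤⁿ`, the map
`Φ : H²(Γ,Z) → Alt²(Γ,Z)` is an isomorphism: it is surjective (every alternating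
biadditive map is `λ_f` for some cocycle), every cohomology class has a biadditive
representative, and a 2-cocycle is a coboundary if and only if it is symmetric
(injectivity of `Φ`). -/
theorem Phi_iso_free_abelian (n : ℕ) {Z : Type*} [AddCommGroup Z] :
    (∀ η : (Fin n → ℤ) → (Fin n → ℤ) → Z,
      (∀ a b c, η (a + b) c = η a c + η b c) →
      (∀ a b c, η a (b + c) = η a b + η a c) →
      (∀ a, η a a = 0) →
      ∃ f : (Fin n → ℤ) → (Fin n → ℤ) → Z,
        (∀ a b c, f a b + f (a + b) c = f a (b + c) + f b c) ∧
        (∀ a b, f a b - f b a = η a b)) ∧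
    (∀ f : (Fin n → ℤ) → (Fin n → ℤ) → Z,
      (∀ a b c, f a b + f (a + b) c = f a (b + c) + f b c) →
      ∃ g : (Fin n → ℤ) → (Fin n → ℤ) → Z,
        (∀ a b c, g (a + b) c = g a c + g b c) ∧
        (∀ a b c, g a (b + c) = g a b + g a c) ∧
        (∃ h : (Fin n → ℤ) → Z, ∀ a b, f a b - g a b = h a - h (a + b) + h b)) ∧
    (∀ f : (Fin n → ℤ) → (Fin n → ℤ) → Z,
      (∀ a b c, f a b + f (a + b) c = f a (b + c) + f b c) →
      ((∃ h : (Fin n → ℤ) → Z, ∀ a b, f a b = h a - h (a + b) + h b) ↔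
        (∀ a b, f a b = f b a))) := by
  refine ⟨?_, ?_, ?_⟩
  · -- surjectivity of Φ
    intro η h1 h2 h0
    refine ⟨D η, ?_, fun a b => D_sub η h1 h2 h0 a b⟩
    intro a b c
    rw [D_addl, D_addr]
    abel
  · -- biadditive representative for every class
    intro f hc
    set η : (Fin n → ℤ) → (Fin n → ℤ) → Z := fun a b => f a b - f b a with hη
    have h1 : ∀ a b c, η (a + b) c = η a c + η b c := fun a b c => lambda_addl f hc a b c
    have h0 : ∀ a, η a a = 0 := fun a => sub_self _
    have hanti : ∀ a b, η a b = - η b a := fun a b => (neg_sub _ _).symm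
    have h2 : ∀ a b c, η a (b + c) = η a b + η a c := by
      intro a b c
      rw [hanti a (b + c), h1 b c a, neg_add, ← hanti a b, ← hanti a c]
    refine ⟨D η, fun a b c => D_addl η a b c, fun a b c => D_addr η a b c, ?_⟩
    have hFc : ∀ a b c, (f a b - D η a b) + (f (a + b) c - D η (a + b) c)
        = (f a (b + c) - D η a (b + c)) + (f b c - D η b c) := by
      intro a b c
      have h := hc a b c
      have hd : D η a b + D η (a + b) c = D η a (b + c) + D η b c := by
        rw [D_addl, D_addr]; abel
      rw [sub_add_sub_comm, sub_add_sub_comm, h, hd]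
    have hFs : ∀ a b, (f a b - D η a b) = (f b a - D η b a) := by
      intro a b
      have hD := D_sub η h1 h2 h0 a b
      rw [sub_eq_sub_iff_sub_eq_sub]
      exact hD.symm
    obtain ⟨h, hh⟩ := symm_coboundary (fun a b => f a b - D η a b) hFc hFs
    exact ⟨h, hh⟩
  · -- symmetric cocycles are exactly coboundaries
    intro f hc
    constructor
    · rintro ⟨h, hh⟩ a b
      rw [hh a b, hh b a, add_comm b a]
      abel
    · exact symm_coboundary f hc
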